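/- Let n ∈ ℕ, k ∈ {0,1,…,n−1} and r ≥ 1. Let 𝒢 be a sub-σ-algebra, let Z ∼ N_n(0, I_n) be independent of 𝒢, and let P be a 𝒢-measurable random n×n real matrix that is almost surely an orthogonal projection of rank at most k. Then n^{−1/r}‖PZ‖_r is stochastically dominated by Σ_{i=1}^k |ξ_i| / n^{1/(r∨2)}, where ξ₁,…,ξ_k are independent standard Gaussian random variables; that is, for every t ∈ ℝ, ℙ( n^{−1/r}‖PZ‖_r > t ) ≤ ℙ( Σ_{i=1}^k |ξ_i| / n^{1/(r∨2)} > t ). -/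

import Mathlib

open MeasureTheory ProbabilityTheory Matrix Finset
open scoped ENNReal NNReal

/-- A pi measurable-space structure on matrices. -/
instance matrixMeasurableSpace {m n α : Type*} [MeasurableSpace α] :
    MeasurableSpace (Matrix m n α) :=
  inferInstanceAs (MeasurableSpace (m → n → α))

theorem aux_lmarginal_prod {δ : Type*} [Fintype δ] [DecidableEq δ] {π : δ → Type*}
    [∀ i, MeasurableSpace (π i)] (μ : ∀ i, Measure (π i)) [∀ i, SigmaFinite (μ i)]
    (g : ∀ i, π i → ℝ≥0∞) (hg : ∀ i, Measurable (g i)) (s : Finset δ) (x : ∀ i, π i) :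
    (∫⋯∫⁻_s, (fun y => ∏ i, g i (y i)) ∂μ) x
      = (∏ i ∈ s, ∫⁻ t, g i t ∂μ i) * ∏ i ∈ sᶜ, g i (x i) := by
  have hF : Measurable fun y : ∀ i, π i => ∏ i, g i (y i) :=
    Finset.measurable_prod _ fun i _ => (hg i).comp (measurable_pi_apply i)
  induction s using Finset.induction generalizing x with
  | empty => simp
  | @insert i s hi ih =>
    rw [MeasureTheory.lmarginal_insert _ hF hi]
    have hie : i ∈ sᶜ := by simpa using hi
    have hsplit : ∀ y : π i,
        ∏ j ∈ sᶜ, g j (Function.update x i y j)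
          = g i y * ∏ j ∈ (insert i s)ᶜ, g j (x j) := by
      intro y
      rw [Finset.compl_insert, ← Finset.mul_prod_erase sᶜ _ hie,
        Function.update_self]
      congr 1
      refine Finset.prod_congr rfl fun j hj => ?_
      rw [Function.update_of_ne (Finset.ne_of_mem_erase hj)]
    calc ∫⁻ y, (∫⋯∫⁻_s, (fun y => ∏ i, g i (y i)) ∂μ) (Function.update x i y) ∂μ i
        = ∫⁻ y, (∏ j ∈ s, ∫⁻ t, g j t ∂μ j) *
            (g i y * ∏ j ∈ (insert i s)ᶜ, g j (x j)) ∂μ i := by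
          refine lintegral_congr fun y => ?_
          rw [ih, hsplit]
      _ = (∏ j ∈ insert i s, ∫⁻ t, g j t ∂μ j) * ∏ j ∈ (insert i s)ᶜ, g j (x j) := by
          rw [Finset.prod_insert hi]
          have : ∀ y, (∏ j ∈ s, ∫⁻ t, g j t ∂μ j) *
              (g i y * ∏ j ∈ (insert i s)ᶜ, g j (x j))
              = ((∏ j ∈ s, ∫⁻ t, g j t ∂μ j) * ∏ j ∈ (insert i s)ᶜ, g j (x j)) * g i y := by
            intro y; ring
          simp_rw [this]
          rw [lintegral_const_mul _ (hg i)]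
          ring

theorem aux_lintegral_pi_prod {δ : Type*} [Fintype δ] [DecidableEq δ] {π : δ → Type*}
    [∀ i, MeasurableSpace (π i)] [∀ i, Inhabited (π i)] (μ : ∀ i, Measure (π i))
    [∀ i, SigmaFinite (μ i)]
    (g : ∀ i, π i → ℝ≥0∞) (hg : ∀ i, Measurable (g i)) :
    ∫⁻ y, ∏ i, g i (y i) ∂Measure.pi μ = ∏ i, ∫⁻ t, g i t ∂μ i := by
  rw [MeasureTheory.lintegral_eq_lmarginal_univ (fun i => (default : π i)),
    aux_lmarginal_prod μ g hg]
  simp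

noncomputable def gpdf : (ℝ → ℝ≥0∞) := gaussianPDF 0 1

theorem aux_gaussian_pi_eq {m : ℕ} :
    (Measure.pi fun _ : Fin m => gaussianReal 0 1)
      = (volume : Measure (Fin m → ℝ)).withDensity (fun x => ∏ i, gaussianPDF 0 1 (x i)) := by
  refine Measure.pi_eq fun s hs => ?_
  rw [withDensity_apply _ (MeasurableSet.univ_pi hs)]
  have : ∀ x : Fin m → ℝ, (Set.univ.pi s).indicator (fun x => ∏ i, gaussianPDF 0 1 (x i)) x
      = ∏ i, ((s i).indicator (gaussianPDF 0 1)) (x i) := by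
    intro x
    by_cases hx : x ∈ Set.univ.pi s
    · rw [Set.indicator_of_mem hx]
      refine Finset.prod_congr rfl fun i _ => ?_
      rw [Set.indicator_of_mem (hx i trivial)]
    · rw [Set.indicator_of_notMem hx]
      obtain ⟨i, hi⟩ : ∃ i, x i ∉ s i := by simpa [Set.mem_pi] using hx
      exact (Finset.prod_eq_zero (Finset.mem_univ i) (by simp [Set.indicator_of_notMem hi])).symm
  rw [← lintegral_indicator (MeasurableSet.univ_pi hs)]
  simp_rw [this]
  rw [show (volume : Measure (Fin m → ℝ)) = Measure.pi fun _ => volume from volume_pi.symm]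
  rw [aux_lintegral_pi_prod _ _ (fun i => (measurable_gaussianPDF 0 1).indicator (hs i))]
  refine Finset.prod_congr rfl fun i _ => ?_
  rw [lintegral_indicator (hs i), gaussianReal_of_var_ne_zero 0 one_ne_zero,
    withDensity_apply _ (hs i)]

theorem aux_dot_eq {m : ℕ} (O : Matrix (Fin m) (Fin m) ℝ) (hO : Oᵀ * O = 1)
    (x : Fin m → ℝ) : ∑ i, (O.mulVec x i)^2 = ∑ i, (x i)^2 := by
  have h1 : ∀ v : Fin m → ℝ, ∑ i, (v i)^2 = v ⬝ᵥ v := by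
    intro v; simp [dotProduct, pow_two]
  rw [h1, h1, Matrix.dotProduct_mulVec, ← Matrix.vecMul_transpose,
    Matrix.vecMul_vecMul, hO, Matrix.vecMul_one]

theorem aux_pdf_eq {m : ℕ} (x y : Fin m → ℝ) (h : ∑ i, (x i)^2 = ∑ i, (y i)^2) :
    ∏ i, gaussianPDF 0 1 (x i) = ∏ i, gaussianPDF 0 1 (y i) := by
  have key : ∀ z : Fin m → ℝ, ∏ i, gaussianPDF 0 1 (z i)
      = ENNReal.ofReal ((Real.sqrt (2 * Real.pi))⁻¹ ^ m * Real.exp (-(∑ i, (z i)^2) / 2)) := by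
    intro z
    have : ∀ i : Fin m, gaussianPDF 0 1 (z i)
        = ENNReal.ofReal ((Real.sqrt (2 * Real.pi))⁻¹ * Real.exp (-(z i)^2 / 2)) := by
      intro i
      simp [gaussianPDF, gaussianPDFReal, NNReal.coe_one]
    simp_rw [this]
    rw [← ENNReal.ofReal_prod_of_nonneg]
    · congr 1
      rw [Finset.prod_mul_distrib, Finset.prod_const, Finset.card_univ, Fintype.card_fin]
      congr 1
      rw [← Real.exp_sum]
      congr 1
      rw [← Finset.sum_div, ← Finset.sum_neg_distrib]
    · intro i _
      positivity
  rw [key, key, h]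

theorem aux_map_rotation {m : ℕ} (O : Matrix (Fin m) (Fin m) ℝ) (hO : Oᵀ * O = 1) :
    (Measure.pi fun _ : Fin m => gaussianReal 0 1).map (fun x => O.mulVec x)
      = Measure.pi fun _ : Fin m => gaussianReal 0 1 := by
  have hdet2 : O.det * O.det = 1 := by
    have := congrArg Matrix.det hO
    rwa [Matrix.det_mul, Matrix.det_transpose, Matrix.det_one] at this
  have hdetne : O.det ≠ 0 := by
    intro h; rw [h, mul_zero] at hdet2; exact zero_ne_one hdet2
  have habs : |O.det| = 1 := by
    rcases mul_self_eq_one_iff.mp hdet2 with h | h <;> simp [h]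
  have hfun : (fun x => O.mulVec x) = ⇑(Matrix.toLin' O) := by
    funext x; rw [Matrix.toLin'_apply]
  have hmeas : Measurable (fun x : Fin m → ℝ => O.mulVec x) := by
    rw [hfun]
    exact (LinearMap.continuous_of_finiteDimensional _).measurable
  have hvol : (volume : Measure (Fin m → ℝ)).map (fun x => O.mulVec x) = volume := by
    rw [hfun]
    have hdl : LinearMap.det (Matrix.toLin' O) ≠ 0 := by
      rw [LinearMap.det_toLin']; exact hdetne
    rw [Real.map_linearMap_volume_pi_eq_smul_volume_pi hdl, LinearMap.det_toLin']
    rw [abs_inv, habs]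
    simp
  have hD : Measurable (fun x : Fin m → ℝ => ∏ i, gaussianPDF 0 1 (x i)) :=
    Finset.measurable_prod _ fun i _ =>
      (measurable_gaussianPDF 0 1).comp (measurable_pi_apply i)
  refine Measure.ext fun s hs => ?_
  rw [Measure.map_apply hmeas hs, aux_gaussian_pi_eq,
    withDensity_apply _ (hmeas hs), withDensity_apply _ hs]
  calc ∫⁻ x in (fun x => O.mulVec x) ⁻¹' s, ∏ i, gaussianPDF 0 1 (x i) ∂volume
      = ∫⁻ x in (fun x => O.mulVec x) ⁻¹' s, ∏ i, gaussianPDF 0 1 (O.mulVec x i) ∂volume := by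
        refine setLIntegral_congr_fun (hmeas hs) (fun x _ => ?_)
        exact aux_pdf_eq _ _ (aux_dot_eq O hO x).symm
    _ = ∫⁻ y in s, ∏ i, gaussianPDF 0 1 (y i) ∂((volume : Measure (Fin m → ℝ)).map (fun x => O.mulVec x)) :=
        (setLIntegral_map hs hD hmeas).symm
    _ = ∫⁻ y in s, ∏ i, gaussianPDF 0 1 (y i) ∂volume := by rw [hvol]

theorem aux_marginal {n k : ℕ} (T : Finset (Fin n)) (hT : T.card = k) (c t : ℝ) :
    (Measure.pi fun _ : Fin n => gaussianReal 0 1) {w | t < c * ∑ i ∈ T, |w i|}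
      = (Measure.pi fun _ : Fin k => gaussianReal 0 1) {x | t < c * ∑ i, |x i|} := by
  classical
  set p : Fin n → Prop := fun i => i ∈ T with hp
  have hmp := measurePreserving_piEquivPiSubtypeProd
    (fun _ : Fin n => gaussianReal 0 1) p
  set A : Set ({i // p i} → ℝ) := {u | t < c * ∑ i, |u i|} with hA
  have hAmeas : MeasurableSet A := by
    refine measurableSet_lt measurable_const ?_
    exact measurable_const.mul
      (Finset.measurable_sum _ fun i _ => (measurable_pi_apply i).abs)
  have hset : {w : Fin n → ℝ | t < c * ∑ i ∈ T, |w i|}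
      = (MeasurableEquiv.piEquivPiSubtypeProd (fun _ : Fin n => ℝ) p) ⁻¹'
        (A ×ˢ Set.univ) := by
    ext w
    simp only [Set.mem_setOf_eq, Set.mem_preimage, Set.mem_prod, Set.mem_univ, and_true,
      MeasurableEquiv.piEquivPiSubtypeProd, Equiv.piEquivPiSubtypeProd,
      MeasurableEquiv.coe_mk, Equiv.coe_fn_mk, hA]
    rw [← Finset.sum_coe_sort T fun i => |w i|]
  rw [hset, hmp.measure_preimage (hAmeas.prod MeasurableSet.univ).nullMeasurableSet,
    Measure.prod_prod, measure_univ, mul_one]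
  have e2 : Fin k ≃ {i // p i} := (Finset.equivFinOfCardEq hT).symm
  have hmp2 := measurePreserving_piCongrLeft
    (fun _ : {i // p i} => gaussianReal 0 1) e2
  have hpre : (MeasurableEquiv.piCongrLeft (fun _ => ℝ) e2) ⁻¹' A
      = {x : Fin k → ℝ | t < c * ∑ i, |x i|} := by
    ext x
    simp only [Set.mem_preimage, hA, Set.mem_setOf_eq]
    have : ∑ j, |(MeasurableEquiv.piCongrLeft (fun _ => ℝ) e2) x j|
        = ∑ i, |x i| := by
      rw [← Equiv.sum_comp e2 fun j => |(MeasurableEquiv.piCongrLeft (fun _ => ℝ) e2) x j|]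
      refine Finset.sum_congr rfl fun i _ => ?_
      rw [MeasurableEquiv.piCongrLeft_apply_apply]
    rw [this]
  rw [← hpre]
  have h3 := (hmp2.measure_preimage hAmeas.nullMeasurableSet).symm
  convert h3 using 2
  congr!

theorem aux_sqrt_le_sum {m : ℕ} (s : Finset (Fin m)) (w : Fin m → ℝ) :
    Real.sqrt (∑ i ∈ s, (w i)^2) ≤ ∑ i ∈ s, |w i| := by
  have h1 : ∑ i ∈ s, (w i)^2 ≤ (∑ i ∈ s, |w i|)^2 := by
    calc ∑ i ∈ s, (w i)^2 = ∑ i ∈ s, |w i|^2 := by simp [sq_abs]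
      _ ≤ (∑ i ∈ s, |w i|)^2 := Finset.sum_sq_le_sq_sum_of_nonneg fun i _ => abs_nonneg _
  calc Real.sqrt (∑ i ∈ s, (w i)^2) ≤ Real.sqrt ((∑ i ∈ s, |w i|)^2) := Real.sqrt_le_sqrt h1
    _ = ∑ i ∈ s, |w i| := Real.sqrt_sq (Finset.sum_nonneg fun i _ => abs_nonneg _)

theorem aux_fiber {n k : ℕ} (hk : k ≤ n) (t c : ℝ) (hc : 0 ≤ c)
    (M : Matrix (Fin n) (Fin n) ℝ) (h1 : Mᵀ = M) (h2 : M * M = M) (h3 : M.rank ≤ k) :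
    (Measure.pi fun _ : Fin n => gaussianReal 0 1)
        {z | t < c * Real.sqrt (∑ i, (M.mulVec z i)^2)}
      ≤ (Measure.pi fun _ : Fin k => gaussianReal 0 1) {x | t < c * ∑ i, |x i|} := by
  classical
  have hherm : M.IsHermitian := by
    show Mᴴ = M
    rwa [Matrix.conjTranspose_eq_transpose_of_trivial]
  set U : Matrix (Fin n) (Fin n) ℝ := (Matrix.IsHermitian.eigenvectorUnitary hherm : Matrix (Fin n) (Fin n) ℝ) with hU
  set lam : Fin n → ℝ := hherm.eigenvalues with hlam
  have hd : (RCLike.ofReal ∘ lam : Fin n → ℝ) = lam := by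
    funext i; simp
  have hU1 : star U * U = 1 := Unitary.coe_star_mul_self (Matrix.IsHermitian.eigenvectorUnitary hherm)
  have hU2 : U * star U = 1 := Unitary.coe_mul_star_self (Matrix.IsHermitian.eigenvectorUnitary hherm)
  have hdiagU : star U * M * U = Matrix.diagonal lam := by
    have := Matrix.IsHermitian.conjStarAlgAut_star_eigenvectorUnitary hherm
    rw [Unitary.conjStarAlgAut_star_apply] at this
    rwa [hd] at this
  have hspec : M = U * Matrix.diagonal lam * star U := by
    have := Matrix.IsHermitian.spectral_theorem hherm
    rw [Unitary.conjStarAlgAut_apply] at this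
    rwa [hd] at this
  have heig : ∀ i, lam i = 0 ∨ lam i = 1 := by
    have hsq : Matrix.diagonal lam * Matrix.diagonal lam = Matrix.diagonal lam := by
      rw [← hdiagU]
      calc (star U * M * U) * (star U * M * U)
          = star U * (M * ((U * star U) * M)) * U := by
            simp only [Matrix.mul_assoc]
        _ = star U * (M * M) * U := by rw [hU2, Matrix.one_mul]
        _ = star U * M * U := by rw [h2]
    rw [Matrix.diagonal_mul_diagonal] at hsq
    intro i
    have hii : lam i * lam i = lam i := congrFun (Matrix.diagonal_injective hsq) i
    have hfac : lam i * (lam i - 1) = 0 := by ring_nf; linear_combination hii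
    rcases mul_eq_zero.mp hfac with h | h
    · exact Or.inl h
    · exact Or.inr (by linarith)
  set T : Finset (Fin n) := Finset.univ.filter (fun i => lam i ≠ 0) with hT
  have hcardT : T.card ≤ k := by
    have hre := hherm.rank_eq_card_non_zero_eigs
    rw [Fintype.card_subtype, ← hlam] at hre
    rw [hT, ← hre]
    exact h3
  obtain ⟨T', hTT', hT'card⟩ := Finset.exists_superset_card_eq hcardT (by simpa using hk)
  -- key identity
  have key : ∀ z : Fin n → ℝ, ∑ i, (M.mulVec z i)^2
      = ∑ i ∈ T, (((star U).mulVec z) i)^2 := by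
    intro z
    have hMz : M.mulVec z = U.mulVec ((Matrix.diagonal lam).mulVec ((star U).mulVec z)) := by
      rw [hspec, Matrix.mulVec_mulVec, Matrix.mulVec_mulVec]
    have hUorth : Uᵀ * U = 1 := by
      rw [← Matrix.conjTranspose_eq_transpose_of_trivial, ← Matrix.star_eq_conjTranspose, hU1]
    rw [hMz, aux_dot_eq U hUorth]
    set w := (star U).mulVec z with hw
    calc ∑ i, ((Matrix.diagonal lam).mulVec w i)^2
        = ∑ i, (lam i * w i)^2 := by
          refine Finset.sum_congr rfl fun i _ => ?_
          rw [Matrix.mulVec_diagonal]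
      _ = ∑ i ∈ T, (w i)^2 := by
          rw [hT, Finset.sum_filter]
          refine Finset.sum_congr rfl fun i _ => ?_
          rcases heig i with h | h
          · simp [h]
          · simp [h]
  -- rewrite the set and use rotation invariance
  have hsetmeas : MeasurableSet {w : Fin n → ℝ | t < c * Real.sqrt (∑ i ∈ T, (w i)^2)} := by
    refine measurableSet_lt measurable_const ?_
    refine measurable_const.mul <| Measurable.sqrt ?_
    exact Finset.measurable_sum _ fun i _ => (measurable_pi_apply i).pow_const 2
  have hOorth : (star U)ᵀ * star U = 1 := by
    rw [← Matrix.conjTranspose_eq_transpose_of_trivial, ← Matrix.star_eq_conjTranspose,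
      star_star, hU2]
  have hmeasmul : Measurable (fun z : Fin n → ℝ => (star U).mulVec z) := by
    have : (fun z : Fin n → ℝ => (star U).mulVec z) = ⇑(Matrix.toLin' (star U)) := by
      funext z; rw [Matrix.toLin'_apply]
    rw [this]
    exact (LinearMap.continuous_of_finiteDimensional _).measurable
  have hrw : {z : Fin n → ℝ | t < c * Real.sqrt (∑ i, (M.mulVec z i)^2)}
      = (fun z : Fin n → ℝ => (star U).mulVec z) ⁻¹'
        {w : Fin n → ℝ | t < c * Real.sqrt (∑ i ∈ T, (w i)^2)} := by
    ext z
    simp only [Set.mem_setOf_eq, Set.mem_preimage, key z]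
  rw [hrw, ← Measure.map_apply hmeasmul hsetmeas, aux_map_rotation (star U) hOorth]
  -- monotonicity step
  have hsub : {w : Fin n → ℝ | t < c * Real.sqrt (∑ i ∈ T, (w i)^2)}
      ⊆ {w : Fin n → ℝ | t < c * ∑ i ∈ T', |w i|} := by
    intro w hw
    simp only [Set.mem_setOf_eq] at hw ⊢
    refine lt_of_lt_of_le hw (mul_le_mul_of_nonneg_left ?_ hc)
    refine le_trans (aux_sqrt_le_sum T w) ?_
    exact Finset.sum_le_sum_of_subset_of_nonneg hTT' fun i _ _ => abs_nonneg _
  refine le_trans (measure_mono hsub) ?_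
  rw [aux_marginal T' hT'card c t]

theorem aux_norm_ineq {n : ℕ} (hn : 0 < n) {r : ℝ} (hr : 1 ≤ r) (y : Fin n → ℝ) :
    ((n : ℝ) ^ (1 / r))⁻¹ * (∑ i, |y i| ^ r) ^ (1 / r)
      ≤ ((n : ℝ) ^ (1 / max r 2))⁻¹ * Real.sqrt (∑ i, (y i)^2) := by
  have hr0 : (0:ℝ) < r := lt_of_lt_of_le one_pos hr
  have hrne : r ≠ 0 := ne_of_gt hr0
  have hnpos : (0:ℝ) < (n:ℝ) := Nat.cast_pos.mpr hn
  have hB0 : (0:ℝ) ≤ ∑ i, (y i)^2 := Finset.sum_nonneg fun i _ => sq_nonneg _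
  have hA0 : (0:ℝ) ≤ ∑ i, |y i| ^ r :=
    Finset.sum_nonneg fun i _ => Real.rpow_nonneg (abs_nonneg _) r
  set A := ∑ i, |y i| ^ r with hA
  set B := ∑ i, (y i)^2 with hB
  set s := Real.sqrt B with hs
  have hs0 : 0 ≤ s := Real.sqrt_nonneg _
  have hs2 : s ^ 2 = B := Real.sq_sqrt hB0
  have hais : ∀ i, |y i| ≤ s := by
    intro i
    have h1 : (y i)^2 ≤ B := Finset.single_le_sum (fun j _ => sq_nonneg (y j)) (Finset.mem_univ i)
    calc |y i| = Real.sqrt ((y i)^2) := (Real.sqrt_sq_eq_abs _).symm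
      _ ≤ s := Real.sqrt_le_sqrt h1
  rcases le_total 2 r with h2r | hr2
  · -- case 2 ≤ r
    rw [max_eq_left h2r]
    refine mul_le_mul_of_nonneg_left ?_ (inv_nonneg.mpr (Real.rpow_nonneg hnpos.le _))
    -- show A^(1/r) ≤ s
    have hAs : A ≤ s ^ r := by
      have hterm : ∀ i, |y i| ^ r ≤ (y i)^2 * s ^ (r - 2) := by
        intro i
        rcases eq_or_lt_of_le (abs_nonneg (y i)) with hz | hz
        · rw [← hz, Real.zero_rpow hrne]
          have : (y i)^2 = 0 := by rw [← sq_abs, ← hz]; ring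
          rw [this, zero_mul]
        · have : |y i| ^ r = |y i| ^ (2:ℝ) * |y i| ^ (r - 2) := by
            rw [← Real.rpow_add hz]; ring_nf
          rw [this, Real.rpow_two, sq_abs]
          refine mul_le_mul_of_nonneg_left ?_ (sq_nonneg _)
          exact Real.rpow_le_rpow (abs_nonneg _) (hais i) (by linarith)
      calc A ≤ ∑ i, (y i)^2 * s ^ (r - 2) := Finset.sum_le_sum fun i _ => hterm i
        _ = B * s ^ (r - 2) := by rw [← Finset.sum_mul]
        _ = s ^ (2:ℝ) * s ^ (r - 2) := by rw [← hs2, Real.rpow_two]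
        _ = s ^ r := by rw [← Real.rpow_add' hs0 (by linarith)]; ring_nf
    calc A ^ (1/r) ≤ (s ^ r) ^ (1/r) :=
          Real.rpow_le_rpow hA0 hAs (by positivity)
      _ = s := by
          rw [← Real.rpow_mul hs0, mul_one_div_cancel hrne, Real.rpow_one]
  · -- case r ≤ 2
    rw [max_eq_right hr2]
    have hp1 : (1:ℝ) ≤ 2 / r := (one_le_div hr0).mpr hr2
    have jensen := Real.rpow_arith_mean_le_arith_mean_rpow Finset.univ
      (fun _ : Fin n => 1 / (n:ℝ)) (fun i => |y i| ^ r)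
      (fun i _ => by positivity) (by simp [Finset.card_univ]; field_simp)
      (fun i _ => Real.rpow_nonneg (abs_nonneg _) r) hp1
    have hsum1 : ∑ i, (1/(n:ℝ)) * |y i| ^ r = A / n := by
      rw [← Finset.mul_sum]; ring
    have hsum2 : ∑ i, (1/(n:ℝ)) * (|y i| ^ r) ^ (2/r) = B / n := by
      have : ∀ i : Fin n, (|y i| ^ r) ^ (2/r) = (y i)^2 := by
        intro i
        rw [← Real.rpow_mul (abs_nonneg _)]
        have hexp : r * (2 / r) = 2 := by field_simp
        rw [hexp, Real.rpow_two, sq_abs]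
      simp_rw [this]
      rw [← Finset.mul_sum]; ring
    rw [hsum1, hsum2] at jensen
    -- (A/n)^(2/r) ≤ B/n ⇒ A/n ≤ (B/n)^(r/2)
    have step2 : A / n ≤ (B / n) ^ (r/2 : ℝ) := by
      have h := Real.rpow_le_rpow (Real.rpow_nonneg (by positivity) _) jensen
        (by positivity : (0:ℝ) ≤ r/2)
      rw [← Real.rpow_mul (by positivity)] at h
      have hexp : 2 / r * (r / 2) = 1 := by field_simp
      rwa [hexp, Real.rpow_one] at h
    have step3 : (A / n) ^ (1/r : ℝ) ≤ (B / n) ^ (1/2 : ℝ) := by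
      have h := Real.rpow_le_rpow (by positivity) step2 (by positivity : (0:ℝ) ≤ 1/r)
      rw [← Real.rpow_mul (by positivity)] at h
      have hexp : r / 2 * (1 / r) = 1 / 2 := by
        field_simp
      rwa [hexp] at h
    rw [Real.div_rpow hA0 hnpos.le, Real.div_rpow hB0 hnpos.le] at step3
    rw [hs, Real.sqrt_eq_rpow]
    calc ((n:ℝ) ^ (1/r))⁻¹ * A ^ (1/r) = A ^ (1/r) / (n:ℝ) ^ (1/r) := by ring
      _ ≤ B ^ (1/2:ℝ) / (n:ℝ) ^ (1/2:ℝ) := step3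
      _ = ((n:ℝ) ^ (1/(2:ℝ)))⁻¹ * B ^ (1/2:ℝ) := by ring

theorem aux_trace_eq_rank {n : ℕ} (M : Matrix (Fin n) (Fin n) ℝ)
    (h1 : Mᵀ = M) (h2 : M * M = M) : M.trace = (M.rank : ℝ) := by
  classical
  have hherm : M.IsHermitian := by
    show Mᴴ = M
    rwa [Matrix.conjTranspose_eq_transpose_of_trivial]
  set U : Matrix (Fin n) (Fin n) ℝ := (Matrix.IsHermitian.eigenvectorUnitary hherm : Matrix (Fin n) (Fin n) ℝ) with hU
  set lam : Fin n → ℝ := hherm.eigenvalues with hlam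
  have hd : (RCLike.ofReal ∘ lam : Fin n → ℝ) = lam := by
    funext i; simp
  have hU1 : star U * U = 1 := Unitary.coe_star_mul_self (Matrix.IsHermitian.eigenvectorUnitary hherm)
  have hU2 : U * star U = 1 := Unitary.coe_mul_star_self (Matrix.IsHermitian.eigenvectorUnitary hherm)
  have hdiagU : star U * M * U = Matrix.diagonal lam := by
    have := Matrix.IsHermitian.conjStarAlgAut_star_eigenvectorUnitary hherm
    rw [Unitary.conjStarAlgAut_star_apply] at this
    rwa [hd] at this
  have hspec : M = U * Matrix.diagonal lam * star U := by
    have := Matrix.IsHermitian.spectral_theorem hherm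
    rw [Unitary.conjStarAlgAut_apply] at this
    rwa [hd] at this
  have heig : ∀ i, lam i = 0 ∨ lam i = 1 := by
    have hsq : Matrix.diagonal lam * Matrix.diagonal lam = Matrix.diagonal lam := by
      rw [← hdiagU]
      calc (star U * M * U) * (star U * M * U)
          = star U * (M * ((U * star U) * M)) * U := by
            simp only [Matrix.mul_assoc]
        _ = star U * (M * M) * U := by rw [hU2, Matrix.one_mul]
        _ = star U * M * U := by rw [h2]
    rw [Matrix.diagonal_mul_diagonal] at hsq
    intro i
    have hii : lam i * lam i = lam i := congrFun (Matrix.diagonal_injective hsq) i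
    have hfac : lam i * (lam i - 1) = 0 := by ring_nf; linear_combination hii
    rcases mul_eq_zero.mp hfac with h | h
    · exact Or.inl h
    · exact Or.inr (by linarith)
  have htr : M.trace = ∑ i, lam i := by
    conv_lhs => rw [hspec]
    rw [Matrix.trace_mul_comm, ← Matrix.mul_assoc, hU1, Matrix.one_mul,
      Matrix.trace_diagonal]
  have hrank : M.rank = (Finset.univ.filter (fun i => lam i ≠ 0)).card := by
    have hre := hherm.rank_eq_card_non_zero_eigs
    rwa [Fintype.card_subtype, ← hlam] at hre
  rw [htr, hrank]
  rw [← Finset.sum_filter_ne_zero Finset.univ (f := lam)]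
  rw [Finset.sum_congr rfl (fun i hi => ?_), Finset.sum_const, nsmul_eq_mul, mul_one,
    Nat.cast_inj.mpr rfl]
  · rcases heig i with h | h
    · exact absurd h (by simpa using (Finset.mem_filter.mp hi).2)
    · exact h

theorem aux_G_measurable {n k : ℕ} :
    MeasurableSet {M : Matrix (Fin n) (Fin n) ℝ |
      Mᵀ = M ∧ M * M = M ∧ M.trace ≤ (k : ℝ)} := by
  have hentry : ∀ i j, Measurable fun M : Matrix (Fin n) (Fin n) ℝ => M i j := by
    intro i j
    exact (measurable_pi_apply j).comp (measurable_pi_apply i)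
  have h1 : MeasurableSet {M : Matrix (Fin n) (Fin n) ℝ | Mᵀ = M} := by
    have : {M : Matrix (Fin n) (Fin n) ℝ | Mᵀ = M}
        = ⋂ i, ⋂ j, {M : Matrix (Fin n) (Fin n) ℝ | M j i = M i j} := by
      ext M
      simp only [Set.mem_setOf_eq, Set.mem_iInter]
      constructor
      · intro h i j
        exact congrFun (congrFun h i) j
      · intro h
        ext i j
        exact h i j
    rw [this]
    exact MeasurableSet.iInter fun i => MeasurableSet.iInter fun j =>
      measurableSet_eq_fun (hentry j i) (hentry i j)
  have h2 : MeasurableSet {M : Matrix (Fin n) (Fin n) ℝ | M * M = M} := by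
    have : {M : Matrix (Fin n) (Fin n) ℝ | M * M = M}
        = ⋂ i, ⋂ j, {M : Matrix (Fin n) (Fin n) ℝ | ∑ l, M i l * M l j = M i j} := by
      ext M
      simp only [Set.mem_setOf_eq, Set.mem_iInter]
      constructor
      · intro h i j
        have := congrFun (congrFun h i) j
        rwa [Matrix.mul_apply] at this
      · intro h
        ext i j
        rw [Matrix.mul_apply]
        exact h i j
    rw [this]
    refine MeasurableSet.iInter fun i => MeasurableSet.iInter fun j =>
      measurableSet_eq_fun ?_ (hentry i j)
    exact Finset.measurable_sum _ fun l _ => (hentry i l).mul (hentry l j)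
  have h3 : MeasurableSet {M : Matrix (Fin n) (Fin n) ℝ | M.trace ≤ (k : ℝ)} := by
    refine measurableSet_le ?_ measurable_const
    exact Finset.measurable_sum _ fun i _ => hentry i i
  exact h1.inter (h2.inter h3)


/-- **Stochastic domination for Gaussian vectors under random projections**
(Lemma 7.1 of the paper).  If `Z ∼ N_n(0, Iₙ)` is independent of `𝒢` and `P` is a
`𝒢`-measurable random orthogonal projection matrix of rank at most `k`, then
`n^{−1/r} ‖P Z‖_r` is stochastically dominated by `∑_{i=1}^k |ξ_i| / n^{1/(r ∨ 2)}`
for independent standard Gaussians `ξ₁, …, ξ_k`. -/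
theorem projected_gaussian_stochastic_domination
    {n k : ℕ} (hk : k < n) (r : ℝ) (hr : 1 ≤ r)
    {Ω : Type*} [m0 : MeasurableSpace Ω] (μ : Measure Ω) [IsProbabilityMeasure μ]
    (Z : Ω → Fin n → ℝ) (hZmeas : Measurable[m0] Z)
    (hZlaw : μ.map Z = Measure.pi fun _ : Fin n => gaussianReal 0 1)
    (𝒢 : MeasurableSpace Ω) (h𝒢 : 𝒢 ≤ m0)
    (hZindep : Indep (MeasurableSpace.comap Z inferInstance) 𝒢 μ)
    (P : Ω → Matrix (Fin n) (Fin n) ℝ) (hPmeas : Measurable[𝒢] P)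
    (hP : ∀ᵐ ω ∂μ, (P ω)ᵀ = P ω ∧ P ω * P ω = P ω ∧ (P ω).rank ≤ k) :
    ∀ t : ℝ,
      μ {ω | t < ((n : ℝ) ^ (1 / r))⁻¹ *
            (∑ i, |((P ω).mulVec (Z ω)) i| ^ r) ^ (1 / r)} ≤
        (Measure.pi fun _ : Fin k => gaussianReal 0 1)
          {x | t < (∑ i, |x i|) / (n : ℝ) ^ (1 / max r 2)} := by
  intro t
  have hn : 0 < n := lt_of_le_of_lt (Nat.zero_le k) hk
  set c : ℝ := ((n : ℝ) ^ (1 / max r 2))⁻¹ with hcdef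
  have hc0 : 0 ≤ c := inv_nonneg.mpr (Real.rpow_nonneg (Nat.cast_nonneg n) _)
  have hPm0 : Measurable[m0] P := hPmeas.mono h𝒢 le_rfl
  have hIndep : IndepFun P Z μ := by
    rw [ProbabilityTheory.IndepFun_iff_Indep]
    exact ProbabilityTheory.indep_of_indep_of_le_left hZindep.symm hPmeas.comap_le
  clear hPmeas hZindep h𝒢
  clear 𝒢
  have hpair : Measurable[m0] fun ω => (P ω, Z ω) := hPm0.prodMk hZmeas
  have hentry : ∀ i j : Fin n,
      Measurable fun p : Matrix (Fin n) (Fin n) ℝ × (Fin n → ℝ) => p.1 i j := fun i j =>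
    (measurable_fst.eval (a := i)).eval (a := j)
  have hfS : Measurable fun p : Matrix (Fin n) (Fin n) ℝ × (Fin n → ℝ) =>
      ∑ i, ((p.1.mulVec p.2) i)^2 := by
    refine Finset.measurable_sum _ fun i _ => ?_
    have : (fun p : Matrix (Fin n) (Fin n) ℝ × (Fin n → ℝ) => (p.1.mulVec p.2) i)
        = fun p => ∑ j, p.1 i j * p.2 j := by
      funext p
      rfl
    have hm : Measurable fun p : Matrix (Fin n) (Fin n) ℝ × (Fin n → ℝ) =>
        (p.1.mulVec p.2) i := by
      rw [this]
      exact Finset.measurable_sum _ fun j _ =>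
        (hentry i j).mul ((measurable_pi_apply j).comp measurable_snd)
    exact hm.pow_const 2
  set S : Set (Matrix (Fin n) (Fin n) ℝ × (Fin n → ℝ)) :=
    {p | t < c * Real.sqrt (∑ i, ((p.1.mulVec p.2) i)^2)} with hSdef
  have hS : MeasurableSet S :=
    measurableSet_lt measurable_const (measurable_const.mul hfS.sqrt)
  -- pointwise comparison
  have hsub : {ω | t < ((n : ℝ) ^ (1 / r))⁻¹ *
        (∑ i, |((P ω).mulVec (Z ω)) i| ^ r) ^ (1 / r)}
      ⊆ {ω | (P ω, Z ω) ∈ S} := by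
    intro ω hω
    simp only [Set.mem_setOf_eq] at hω ⊢
    exact lt_of_lt_of_le hω (aux_norm_ineq hn hr ((P ω).mulVec (Z ω)))
  refine le_trans (measure_mono hsub) ?_
  -- product law
  have hlaw : μ.map (fun ω => (P ω, Z ω)) = (μ.map P).prod (μ.map Z) :=
    (ProbabilityTheory.indepFun_iff_map_prod_eq_prod_map_map
      hPm0.aemeasurable hZmeas.aemeasurable).mp hIndep
  have : μ {ω | (P ω, Z ω) ∈ S} = ((μ.map P).prod (μ.map Z)) S := by
    rw [← hlaw, Measure.map_apply hpair hS]
    rfl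
  rw [this, hZlaw, Measure.prod_apply hS]
  -- a.e. bound on fibers
  have hprob : IsProbabilityMeasure (μ.map P) := Measure.isProbabilityMeasure_map hPm0.aemeasurable
  have hPae : ∀ᵐ M ∂(μ.map P),
      Mᵀ = M ∧ M * M = M ∧ M.trace ≤ (k : ℝ) := by
    rw [MeasureTheory.ae_map_iff hPm0.aemeasurable aux_G_measurable]
    refine hP.mono fun ω h => ⟨h.1, h.2.1, ?_⟩
    rw [aux_trace_eq_rank _ h.1 h.2.1]
    exact_mod_cast h.2.2
  set B := (Measure.pi fun _ : Fin k => gaussianReal 0 1) {x | t < c * ∑ i, |x i|} with hBdef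
  have hbound : ∀ᵐ M ∂(μ.map P),
      (Measure.pi fun _ : Fin n => gaussianReal 0 1) (Prod.mk M ⁻¹' S) ≤ B := by
    refine hPae.mono fun M hM => ?_
    have hrank : M.rank ≤ k := by
      have := aux_trace_eq_rank M hM.1 hM.2.1
      have hle : (M.rank : ℝ) ≤ (k : ℝ) := this ▸ hM.2.2
      exact_mod_cast hle
    have : (Prod.mk M ⁻¹' S)
        = {z : Fin n → ℝ | t < c * Real.sqrt (∑ i, (M.mulVec z i)^2)} := rfl
    rw [this, hBdef]
    exact aux_fiber hk.le t c hc0 M hM.1 hM.2.1 hrank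
  calc ∫⁻ M, (Measure.pi fun _ : Fin n => gaussianReal 0 1) (Prod.mk M ⁻¹' S) ∂(μ.map P)
      ≤ ∫⁻ _, B ∂(μ.map P) := lintegral_mono_ae hbound
    _ = B := by rw [lintegral_const, measure_univ, mul_one]
    _ = (Measure.pi fun _ : Fin k => gaussianReal 0 1)
          {x | t < (∑ i, |x i|) / (n : ℝ) ^ (1 / max r 2)} := by
        rw [hBdef]
        congr 1
        ext x
        rw [Set.mem_setOf_eq, Set.mem_setOf_eq, div_eq_mul_inv, mul_comm]
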